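/- Let Y be a Riesz space and Z an ideal in Y. Let y₁,…,yₘ ∈ Y and z₁,…,zₘ ∈ Z be such that ∑ᵢ zᵢ ≤ ∑ᵢ yᵢ. Suppose there exists z ∈ Z with z ≤ yᵢ for each i. Then there exist elements ẑ₁,…,ẑₘ ∈ Z such that ∑ᵢ ẑᵢ = ∑ᵢ zᵢ and ẑᵢ ≤ yᵢ for each i. -/
import Mathlib

section Aux

variable {Y : Type*} [AddCommGroup Y] [Lattice Y]
    [CovariantClass Y Y (· + ·) (· ≤ ·)] [Module ℝ Y]

lemma abs_mem_aux (Z : Submodule ℝ Y) (hsolid : ∀ x y : Y, |x| ≤ |y| → y ∈ Z → x ∈ Z)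
    {a : Y} (ha : a ∈ Z) : |a| ∈ Z :=
  hsolid _ a (by rw [abs_abs]) ha

lemma between_mem_aux (Z : Submodule ℝ Y) (hsolid : ∀ x y : Y, |x| ≤ |y| → y ∈ Z → x ∈ Z)
    {a b x : Y} (ha : a ∈ Z) (hb : b ∈ Z) (hax : a ≤ x) (hxb : x ≤ b) :
    x ∈ Z := by
  have h1 : x - a ∈ Z := by
    refine hsolid _ (b - a) ?_ (Z.sub_mem hb ha)
    rw [abs_of_nonneg (by simpa using hax), abs_of_nonneg (by simpa using hax.trans hxb)]
    simpa using hxb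
  simpa using Z.add_mem h1 ha

lemma inf_mem_aux (Z : Submodule ℝ Y) (hsolid : ∀ x y : Y, |x| ≤ |y| → y ∈ Z → x ∈ Z)
    {a b : Y} (ha : a ∈ Z) (hb : b ∈ Z) : a ⊓ b ∈ Z := by
  refine between_mem_aux Z hsolid (a := -(|a| + |b|)) (b := |a| + |b|)
    (Z.neg_mem (Z.add_mem (abs_mem_aux Z hsolid ha) (abs_mem_aux Z hsolid hb)))
    (Z.add_mem (abs_mem_aux Z hsolid ha) (abs_mem_aux Z hsolid hb)) ?_ ?_
  · refine le_inf ?_ ?_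
    · have h1 : -(|a| + |b|) ≤ -|a| := by
        have := abs_nonneg b; simpa using this
      exact h1.trans (neg_le.mpr (neg_le_abs a))
    · have h1 : -(|a| + |b|) ≤ -|b| := by
        have h := abs_nonneg a
        rw [neg_add_rev]
        simpa using add_le_add_left (neg_nonpos.mpr h) (-|b|)
      exact h1.trans (neg_le.mpr (neg_le_abs b))
  · have h1 : a ⊓ b ≤ |a| := inf_le_left.trans (le_abs_self a)
    have h2 : |a| ≤ |a| + |b| := by have := abs_nonneg b; simpa using this
    exact h1.trans h2

lemma smul_le_sum_aux {z : Y} : ∀ (k : ℕ) (f : Fin k → Y), (∀ i, z ≤ f i) → k • z ≤ ∑ i, f i := by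
  intro k
  induction k with
  | zero => intro f _; simp
  | succ k ih =>
    intro f h
    rw [Fin.sum_univ_succ, succ_nsmul, add_comm (k • z) z]
    exact add_le_add (h 0) (ih (fun i => f i.succ) (fun i => h i.succ))

lemma riesz_aux (Z : Submodule ℝ Y) (hsolid : ∀ x y : Y, |x| ≤ |y| → y ∈ Z → x ∈ Z) :
    ∀ (n : ℕ) (y : Fin (n + 1) → Y) (s : Y), s ∈ Z → s ≤ ∑ i, y i →
    ∀ z : Y, z ∈ Z → (∀ i, z ≤ y i) →
    ∃ w : Fin (n + 1) → Y, (∀ i, w i ∈ Z) ∧ (∑ i, w i = s) ∧ ∀ i, w i ≤ y i := by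
  intro n
  induction n with
  | zero =>
    intro y s hsZ hle z hzZ hzy
    refine ⟨fun _ => s, fun _ => hsZ, by simp, fun i => ?_⟩
    have hi : i = 0 := Fin.fin_one_eq_zero i
    subst hi
    simpa using hle
  | succ n ih =>
    intro y s hsZ hle z hzZ hzy
    set T : Y := ∑ i : Fin (n + 1), y i.succ with hT
    have hsplit : ∑ i, y i = y 0 + T := Fin.sum_univ_succ y
    have hzsum : (n + 1) • z = ∑ _i : Fin (n + 1), z := by
      simp [Finset.sum_const, Finset.card_univ]
    have hzT : (n + 1) • z ≤ T := by
      rw [hT]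
      exact smul_le_sum_aux (n + 1) (fun i => y i.succ) (fun i => hzy i.succ)
    have hzn : ((n : ℕ) + 1) • z ∈ Z := by
      rw [hzsum]; exact Submodule.sum_mem Z fun _ _ => hzZ
    set w0 : Y := y 0 ⊓ (s - (n + 1) • z) with hw0
    have hw0Z : w0 ∈ Z := by
      have hlb : z ⊓ (s - (n + 1) • z) ∈ Z :=
        inf_mem_aux Z hsolid hzZ (Z.sub_mem hsZ hzn)
      refine between_mem_aux Z hsolid hlb (Z.sub_mem hsZ hzn) ?_ inf_le_right
      exact inf_le_inf_right _ (hzy 0)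
    have hw0y : w0 ≤ y 0 := inf_le_left
    have hs'T : s - w0 ≤ T := by
      have h1 : s - T ≤ y 0 := by
        have h := hle
        rw [hsplit] at h
        simpa [sub_le_iff_le_add, add_comm] using h
      have h2 : s - T ≤ s - (n + 1) • z := sub_le_sub_left hzT s
      exact sub_le_comm.mp (le_inf h1 h2)
    obtain ⟨w', hw'Z, hw'sum, hw'y⟩ :=
      ih (fun i => y i.succ) (s - w0) (Z.sub_mem hsZ hw0Z) hs'T z hzZ (fun i => hzy i.succ)
    refine ⟨Fin.cons w0 w', ?_, ?_, ?_⟩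
    · intro i
      refine Fin.cases ?_ ?_ i
      · simpa using hw0Z
      · intro j; simpa using hw'Z j
    · rw [Fin.sum_cons, hw'sum]; abel
    · intro i
      refine Fin.cases ?_ ?_ i
      · simpa using hw0y
      · intro j; simpa using hw'y j

end Aux

/-- Riesz decomposition relative to an ideal `Z` of a Riesz space. -/
theorem stmt_1 {Y : Type*} [AddCommGroup Y] [Lattice Y]
    [CovariantClass Y Y (· + ·) (· ≤ ·)] [Module ℝ Y]
    (Z : Submodule ℝ Y) (hsolid : ∀ x y : Y, |x| ≤ |y| → y ∈ Z → x ∈ Z)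
    (m : ℕ) (y : Fin m → Y) (zv : Fin m → Y) (hzv : ∀ i, zv i ∈ Z)
    (hle : ∑ i, zv i ≤ ∑ i, y i)
    (z : Y) (hzZ : z ∈ Z) (hzy : ∀ i, z ≤ y i) :
    ∃ w : Fin m → Y, (∀ i, w i ∈ Z) ∧ (∑ i, w i = ∑ i, zv i) ∧ ∀ i, w i ≤ y i := by
  cases m with
  | zero => exact ⟨fun i => 0, fun i => Z.zero_mem, by simp, fun i => i.elim0⟩
  | succ n =>
    obtain ⟨w, h1, h2, h3⟩ := riesz_aux Z hsolid n y (∑ i, zv i)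
      (Submodule.sum_mem Z fun i _ => hzv i) hle z hzZ hzy
    exact ⟨w, h1, h2, h3⟩
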